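/- Let F be a field, f ∈ F[x] with f(x) − f(0) = x·h(x) where h(0) ≠ 0, and let q ∈ F[x] be an irreducible factor of h of degree d. If n ≥ d and n ≥ 2, then the evaluation map M_n(F) → M_n(F), A ↦ f(A), is not injective. -/

import Mathlib

theorem stmt11 (F : Type*) [Field F] (f h q : Polynomial F)
    (hfh : f - Polynomial.C (f.eval 0) = Polynomial.X * h)
    (h0 : h.eval 0 ≠ 0) (hq : Irreducible q) (hqh : q ∣ h)
    (n : ℕ) (hn : 2 ≤ n) (hnd : q.natDegree ≤ n) :
    ¬ Function.Injective fun A : Matrix (Fin n) (Fin n) F => Polynomial.aeval A f := by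
  intro hinj
  have hq0 : q ≠ 0 := hq.ne_zero
  haveI : Fact (Irreducible q) := ⟨hq⟩
  set K := AdjoinRoot q with hK
  set x : K := AdjoinRoot.root q with hxdef
  have hxq : Polynomial.aeval x q = 0 := by
    rw [AdjoinRoot.aeval_eq, AdjoinRoot.mk_self]
  have hxh : Polynomial.aeval x h = 0 := by
    obtain ⟨r, rfl⟩ := hqh
    simp [map_mul, hxq]
  -- the root is nonzero
  have hx0 : x ≠ 0 := by
    intro hxe
    apply h0
    have : (Polynomial.aeval (0 : K)) h = 0 := hxe ▸ hxh
    rw [show (0 : K) = algebraMap F K 0 by simp,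
      Polynomial.aeval_algebraMap_apply_eq_algebraMap_eval] at this
    exact (algebraMap F K).injective (by simpa using this)
  have hf : f = Polynomial.X * h + Polynomial.C (f.eval 0) := by
    linear_combination hfh
  -- f(x) = f(0)
  have hxf : Polynomial.aeval x f = algebraMap F K (f.eval 0) := by
    rw [hf]; simp [hxh]
  -- the vector space V = K × (Fin (n-d) → F)
  set W := Fin (n - q.natDegree) → F with hW
  set T : Module.End F (K × W) :=
    LinearMap.prodMapAlgHom F K W ((Algebra.lmul F K) x, 0) with hT
  have hT0 : T ≠ 0 := by
    intro hTeq
    have : T (1, 0) = (x, 0) := by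
      show ((Algebra.lmul F K x).prodMap (0 : Module.End F W)) (1, 0) = (x, 0)
      simp
    rw [hTeq] at this
    exact hx0 (by simpa using congrArg Prod.fst this.symm)
  -- f(T) = f(0)
  have hTf : Polynomial.aeval T f = Polynomial.aeval (0 : Module.End F (K × W)) f := by
    have hz : (0 : Module.End F (K × W)) = algebraMap F _ 0 := by simp
    rw [hT, Polynomial.aeval_algHom_apply, hz,
      Polynomial.aeval_algebraMap_apply_eq_algebraMap_eval]
    have hcomp : Polynomial.aeval ((Algebra.lmul F K x, 0) :
        Module.End F K × Module.End F W) f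
        = (algebraMap F _ (f.eval 0), algebraMap F _ (f.eval 0)) := by
      ext1
      · rw [show (Polynomial.aeval ((Algebra.lmul F K x, 0) :
            Module.End F K × Module.End F W) f).1
            = Polynomial.aeval (Algebra.lmul F K x) f from
            (Polynomial.aeval_algHom_apply (AlgHom.fst F _ _) _ f).symm]
        rw [Polynomial.aeval_algHom_apply (Algebra.lmul F K) x f, hxf]
        simp only [Algebra.algebraMap_eq_smul_one, map_smul]
        congr 1
        ext y
        simp
      · rw [show (Polynomial.aeval ((Algebra.lmul F K x, 0) :
            Module.End F K × Module.End F W) f).2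
            = Polynomial.aeval (0 : Module.End F W) f from
            (Polynomial.aeval_algHom_apply (AlgHom.snd F _ _) _ f).symm]
        rw [show (0 : Module.End F W) = algebraMap F _ 0 by simp,
          Polynomial.aeval_algebraMap_apply_eq_algebraMap_eval]
    rw [hcomp]
    exact ((LinearMap.prodMapAlgHom F K W).commutes (f.eval 0))
  -- transfer to matrices via a basis of size n
  have hdim : q.natDegree + (n - q.natDegree) = n := by omega
  let b0 : Module.Basis (Fin q.natDegree ⊕ Fin (n - q.natDegree)) F (K × W) :=
    (AdjoinRoot.powerBasis hq0).basis.prod (Pi.basisFun F _)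
  let b : Module.Basis (Fin n) F (K × W) :=
    b0.reindex (finSumFinEquiv.trans (finCongr hdim))
  let e : Module.End F (K × W) ≃ₐ[F] Matrix (Fin n) (Fin n) F :=
    LinearMap.toMatrixAlgEquiv b
  have he : Polynomial.aeval (e T) f = Polynomial.aeval ((0 : Matrix (Fin n) (Fin n) F)) f := by
    rw [show (0 : Matrix (Fin n) (Fin n) F) = e 0 by simp]
    rw [Polynomial.aeval_algHom_apply e T f, Polynomial.aeval_algHom_apply e 0 f, hTf]
  have := hinj he
  apply hT0
  have : e T = e 0 := by simpa using this
  exact e.injective this
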